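/- Let θ ∈ ℂ and let K be either ℚ or an imaginary quadratic number field (viewed as a subfield of ℂ). Suppose there exist real numbers k₀, l₀ > 0 and E, Q > 1 such that for every integer r ≥ 0 there are algebraic integers p_r and q_r in K with |q_r| < k₀·Qʳ and |q_r·θ − p_r| ≤ l₀·E^{−r}, and such that p_r·q_{r+1} ≠ p_{r+1}·q_r for all r ≥ 0. Then for all algebraic integers p and q in K with |q| ≥ 1/(2l₀), one has |θ − p/q| > 1/(c·|q|^{κ+1}), where κ = log Q / log E and c = 2k₀·Q·(2l₀·E)^κ. -/

import Mathlib

noncomputable section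

noncomputable def csqrt (w : ℂ) : ℂ := w ^ ((2 : ℂ))⁻¹

/-- `K` is the subfield `ℚ` of `ℂ`. -/
def IsRatSubfield (K : Subfield ℂ) : Prop := ∀ z : ℂ, z ∈ K ↔ ∃ a : ℚ, z = (a : ℂ)

/-- `K` is an imaginary quadratic number field viewed as a subfield of `ℂ`. -/
def IsImagQuadSubfield (K : Subfield ℂ) : Prop :=
  ∃ t : ℤ, t < 0 ∧ ∀ z : ℂ, z ∈ K ↔ ∃ a b : ℚ, z = (a : ℂ) + (b : ℂ) * csqrt (t : ℂ)

/-- **Diophantine approximation lemma** (Lemma 7 of the paper): a sequence of good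
approximations in `𝒪_K` yields an effective irrationality measure for `θ`. -/
lemma rat_int_of_integral {a : ℚ} (h : IsIntegral ℤ ((a : ℂ))) : ∃ m : ℤ, a = m := by
  have h2 : IsIntegral ℤ a := by
    have he : (algebraMap ℚ ℂ) a = (a : ℂ) := eq_ratCast _ a
    rw [← he] at h
    exact (isIntegral_algebraMap_iff ((algebraMap ℚ ℂ).injective)).mp h
  obtain ⟨m, hm⟩ := IsIntegrallyClosed.isIntegral_iff.mp h2
  exact ⟨m, by exact_mod_cast hm.symm⟩

lemma one_le_abs_of_integral (K : Subfield ℂ) (hK : IsRatSubfield K ∨ IsImagQuadSubfield K)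
    (z : ℂ) (hz : z ∈ K) (hint : IsIntegral ℤ z) (h0 : z ≠ 0) : 1 ≤ ‖z‖ := by
  rcases hK with h | h
  · obtain ⟨a, rfl⟩ := (h z).mp hz
    obtain ⟨m, rfl⟩ := rat_int_of_integral hint
    have hm : m ≠ 0 := by
      intro hm0; apply h0; rw [hm0]; norm_num
    have h1 : (1 : ℝ) ≤ |(m : ℝ)| := by
      rw [← Int.cast_abs]
      exact_mod_cast Int.one_le_abs hm
    calc (1:ℝ) ≤ |(m:ℝ)| := h1
      _ = ‖((m:ℚ):ℂ)‖ := by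
          simp
  · obtain ⟨t, ht, hKt⟩ := h
    obtain ⟨a, b, rfl⟩ := (hKt z).mp hz
    set s : ℂ := csqrt (t : ℂ) with hs
    have hs2 : s ^ 2 = (t : ℂ) := by
      have := Complex.cpow_nat_inv_pow (t : ℂ) (two_ne_zero)
      rw [hs]; unfold csqrt
      convert this using 2 <;> norm_num
    have hsim : s.re = 0 := by
      have h1 : s.re * s.im = 0 := by
        have : (s ^ 2).im = 0 := by rw [hs2]; simp
        rw [sq, Complex.mul_im] at this; linarith
      have h2 : s.re ^ 2 - s.im ^ 2 < 0 := by
        have : (s ^ 2).re = (t : ℝ) := by rw [hs2]; simp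
        rw [sq, Complex.mul_re] at this
        have htR : (t : ℝ) < 0 := by exact_mod_cast ht
        nlinarith
      rcases mul_eq_zero.mp h1 with h | h
      · exact h
      · nlinarith [sq_nonneg s.re]
    have hconj : (starRingEnd ℂ) s = -s := by
      apply Complex.ext <;> simp [hsim]
    set z := (a : ℂ) + (b : ℂ) * s with hz
    have hN : z * (starRingEnd ℂ) z = (((a^2 - b^2 * t : ℚ)) : ℂ) := by
      rw [hz]
      rw [map_add, map_mul, hconj]
      have ha : (starRingEnd ℂ) (a : ℂ) = (a : ℂ) := by
        rw [Complex.conj_eq_iff_im]; simp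
      have hb : (starRingEnd ℂ) (b : ℂ) = (b : ℂ) := by
        rw [Complex.conj_eq_iff_im]; simp
      rw [ha, hb]
      push_cast
      rw [← hs2]; ring
    have hconj_int : IsIntegral ℤ ((starRingEnd ℂ) z) :=
      hint.map ((starRingEnd ℂ) : ℂ →+* ℂ).toIntAlgHom
    have hNint : IsIntegral ℤ (((a^2 - b^2 * t : ℚ)) : ℂ) := by
      rw [← hN]; exact hint.mul hconj_int
    obtain ⟨m, hm⟩ := rat_int_of_integral hNint
    have hns : Complex.normSq z = (m : ℝ) := by
      have := Complex.mul_conj z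
      rw [hN, hm] at this
      exact_mod_cast (by exact_mod_cast this.symm : ((Complex.normSq z : ℝ) : ℂ) = ((m:ℝ) : ℂ))
    have hpos : 0 < Complex.normSq z := Complex.normSq_pos.mpr h0
    have hm1 : (1 : ℝ) ≤ (m : ℝ) := by
      have : 0 < (m : ℝ) := hns ▸ hpos
      exact_mod_cast (by exact_mod_cast this : (0:ℤ) < m)
    have hsq : 1 ≤ ‖z‖ ^ 2 := by
      rw [Complex.sq_norm, hns]; exact hm1
    nlinarith [norm_nonneg z]

theorem approximation_lemma
    (K : Subfield ℂ) (hK : IsRatSubfield K ∨ IsImagQuadSubfield K)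
    (θ : ℂ) (k₀ l₀ E Q : ℝ)
    (hk₀ : 0 < k₀) (hl₀ : 0 < l₀) (hE : 1 < E) (hQ : 1 < Q)
    (p q : ℕ → ℂ)
    (hmem : ∀ r : ℕ, p r ∈ K ∧ IsIntegral ℤ (p r) ∧ q r ∈ K ∧ IsIntegral ℤ (q r))
    (hq : ∀ r : ℕ, ‖q r‖ < k₀ * Q ^ r)
    (happ : ∀ r : ℕ, ‖q r * θ - p r‖ ≤ l₀ / E ^ r)
    (hne : ∀ r : ℕ, p r * q (r + 1) ≠ p (r + 1) * q r)
    (κ c : ℝ)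
    (hκ : κ = Real.log Q / Real.log E)
    (hc : c = 2 * k₀ * Q * (2 * l₀ * E) ^ κ) :
    ∀ P R : ℂ, P ∈ K → IsIntegral ℤ P → R ∈ K → IsIntegral ℤ R →
      1 / (2 * l₀) ≤ ‖R‖ →
      1 / (c * ‖R‖ ^ (κ + 1)) < ‖θ - P / R‖ := by
  intro P R hPK hPint hRK hRint hR
  classical
  set A := ‖R‖ with hA
  have hl2 : (0:ℝ) < 2 * l₀ := by linarith
  have hApos : 0 < A := lt_of_lt_of_le (by positivity) hR
  have hRne : R ≠ 0 := norm_pos_iff.mp hApos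
  have hx1 : 1 ≤ 2 * l₀ * A := by
    rw [div_le_iff₀ hl2] at hR; linarith
  set x := 2 * l₀ * A with hxdef
  have hEpos : (0:ℝ) < E := lt_trans one_pos hE
  have hQpos : (0:ℝ) < Q := lt_trans one_pos hQ
  have hex : ∃ n : ℕ, x ≤ E ^ n := by
    obtain ⟨n, hn⟩ := pow_unbounded_of_one_lt x hE
    exact ⟨n, hn.le⟩
  set r := Nat.find hex with hrdef
  have hrx : x ≤ E ^ r := Nat.find_spec hex
  have hEr : E ^ r < x * E := by
    rcases Nat.eq_zero_or_pos r with h0 | h0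
    · rw [h0, pow_zero]; nlinarith
    · have hmin : ¬ (x ≤ E ^ (r - 1)) := Nat.find_min hex (Nat.sub_lt h0 one_pos)
      push_neg at hmin
      have heq : E ^ r = E ^ (r - 1) * E := by
        rw [← pow_succ, Nat.sub_add_cancel h0]
      rw [heq]
      exact mul_lt_mul_of_pos_right hmin hEpos
  have hlogE : 0 < Real.log E := Real.log_pos hE
  have hκpos : 0 < κ := by
    rw [hκ]; exact div_pos (Real.log_pos hQ) hlogE
  have hQE : ∀ n : ℕ, (Q : ℝ) ^ n = (E ^ n) ^ κ := by
    intro n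
    rw [← Real.rpow_natCast Q n, ← Real.rpow_natCast E n, ← Real.rpow_mul hEpos.le,
      Real.rpow_def_of_pos hQpos, Real.rpow_def_of_pos hEpos]
    congr 1
    rw [hκ]; field_simp
  have hQr : Q ^ r ≤ (x * E) ^ κ := by
    rw [hQE r]
    exact Real.rpow_le_rpow (pow_pos hEpos r).le hEr.le hκpos.le
  -- choose s
  have hDne : q r * P - p r * R ≠ 0 ∨ q (r+1) * P - p (r+1) * R ≠ 0 := by
    by_contra h
    push_neg at h
    obtain ⟨h1, h2⟩ := h
    apply hne r
    apply mul_right_cancel₀ hRne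
    linear_combination (-(q (r+1))) * h1 + q r * h2
  obtain ⟨s, hDs, hEs, hQs⟩ : ∃ s, q s * P - p s * R ≠ 0 ∧ E ^ r ≤ E ^ s ∧ Q ^ s ≤ Q ^ (r+1) := by
    rcases hDne with h | h
    · exact ⟨r, h, le_refl _, pow_le_pow_right₀ hQ.le (Nat.le_succ r)⟩
    · exact ⟨r+1, h, pow_le_pow_right₀ hE.le (Nat.le_succ r), le_refl _⟩
  have hmemK : q s * P - p s * R ∈ K :=
    sub_mem (mul_mem (hmem s).2.2.1 hPK) (mul_mem (hmem s).1 hRK)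
  have hintD : IsIntegral ℤ (q s * P - p s * R) :=
    ((hmem s).2.2.2.mul hPint).sub ((hmem s).2.1.mul hRint)
  have h1 : 1 ≤ ‖q s * P - p s * R‖ :=
    one_le_abs_of_integral K hK _ hmemK hintD hDs
  have hdecomp : q s * P - p s * R = q s * (P - θ * R) + R * (q s * θ - p s) := by ring
  have h2 : ‖q s * P - p s * R‖ ≤
      ‖q s‖ * ‖P - θ * R‖ + A * (l₀ / E ^ s) := by
    rw [hdecomp]
    refine (norm_add_le _ _).trans ?_
    rw [norm_mul, norm_mul]
    have := happ s
    have hAnn : (0:ℝ) ≤ A := hApos.le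
    nlinarith [norm_nonneg (q s), norm_nonneg (P - θ * R)]
  have h3 : A * (l₀ / E ^ s) ≤ 1 / 2 := by
    have hEs' : x ≤ E ^ s := le_trans hrx hEs
    have hEsp : (0:ℝ) < E ^ s := pow_pos hEpos s
    rw [mul_div_assoc', div_le_div_iff₀ hEsp (by norm_num : (0:ℝ) < 2)]
    nlinarith
  have h4 : 1 / 2 ≤ ‖q s‖ * ‖P - θ * R‖ := by linarith
  have hPR : ‖P - θ * R‖ = A * ‖θ - P / R‖ := by
    have hfrac : θ - P / R = (θ * R - P) / R := by field_simp
    rw [hfrac, norm_div, ← hA, norm_sub_rev (θ * R) P]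
    field_simp
  set d := ‖θ - P / R‖ with hd
  have h5 : 1 / 2 ≤ ‖q s‖ * (A * d) := by rw [← hPR]; exact h4
  set B := k₀ * Q * (2 * l₀ * E) ^ κ * A ^ κ with hB
  have hxe : (x * E) ^ κ = (2 * l₀ * E) ^ κ * A ^ κ := by
    rw [show x * E = (2 * l₀ * E) * A by rw [hxdef]; ring,
      Real.mul_rpow (by positivity) hApos.le]
  have hqB : ‖q s‖ < B := by
    calc ‖q s‖ < k₀ * Q ^ s := hq s
      _ ≤ k₀ * Q ^ (r+1) := by nlinarith
      _ = k₀ * Q * Q ^ r := by ring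
      _ ≤ k₀ * Q * ((x * E) ^ κ) := mul_le_mul_of_nonneg_left hQr (by positivity)
      _ = B := by rw [hxe, hB]; ring
  have hAd : 0 < A * d := by
    rcases le_or_gt (A * d) 0 with h | h
    · exfalso
      have := mul_nonpos_of_nonneg_of_nonpos (norm_nonneg (q s)) h
      linarith
    · exact h
  have hcA : c * A ^ (κ + 1) = 2 * B * A := by
    rw [hc, hB, Real.rpow_add hApos, Real.rpow_one]; ring
  have hBpos : 0 < B := lt_of_le_of_lt (norm_nonneg _) hqB
  have hgoal : 1 < c * A ^ (κ + 1) * d := by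
    have h6 : 1/2 < B * (A * d) := lt_of_le_of_lt h5 (mul_lt_mul_of_pos_right hqB hAd)
    have h7 : c * A ^ (κ + 1) * d = 2 * (B * (A * d)) := by rw [hcA]; ring
    rw [h7]; linarith
  have hcpos : 0 < c * A ^ (κ + 1) := by rw [hcA]; positivity
  rw [div_lt_iff₀ hcpos]
  linarith [hgoal]
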